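/- Measuring in the Hadamard basis the register R of the state (|0⟩_A|x₀⟩_R + (−1)^z |1⟩_A|x₁⟩_R)/√2 with outcome d ∈ {0,1}^n collapses the A register to the state (|0⟩ + (−1)^{z ⊕ d·(x₀⊕x₁)}|1⟩)/√2. Formally: applying H^{⊗n} to R and projecting R onto |d⟩ leaves register A (after normalization) in (|0⟩ + (−1)^{z ⊕ d·(x₀⊕x₁)}|1⟩)/√2, and every outcome d occurs with equal probability 2^{−n} when x₀ ≠ x₁. -/

import Mathlib

noncomputable section

def bdot {n : ℕ} (e x : Fin n → ZMod 2) : ZMod 2 := ∑ i, e i * x i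

def phase (t : ZMod 2) : ℂ := (-1 : ℂ) ^ t.val

lemma phase_add (s t : ZMod 2) : phase (s + t) = phase s * phase t := by
  rcases (show s = 0 ∨ s = 1 by fin_cases s; exacts [Or.inl rfl, Or.inr rfl]) with rfl | rfl <;>
    rcases (show t = 0 ∨ t = 1 by fin_cases t; exacts [Or.inl rfl, Or.inr rfl]) with rfl | rfl <;>
    norm_num [phase, show ((2:ZMod 2)).val = 0 from rfl, show ((1:ZMod 2)).val = 1 from rfl,
      show ((0:ZMod 2)).val = 0 from rfl]

lemma phase_sq (t : ZMod 2) : phase t * phase t = 1 := by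
  fin_cases t <;>
    norm_num [phase, show ((1:ZMod 2)).val = 1 from rfl, show ((0:ZMod 2)).val = 0 from rfl] <;> simp [ZMod.val]

lemma normSq_phase (t : ZMod 2) : Complex.normSq (phase t) = 1 := by
  fin_cases t <;> simp [phase]

lemma bdot_add {n : ℕ} (d x y : Fin n → ZMod 2) :
    bdot d (x + y) = bdot d x + bdot d y := by
  simp [bdot, mul_add, Finset.sum_add_distrib]

theorem hadamard_measurement_collapse {n : ℕ} (x0 x1 : Fin n → ZMod 2) (hx : x0 ≠ x1)
    (z : ZMod 2) (d : Fin n → ZMod 2) :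
    let ψ : ZMod 2 × (Fin n → ZMod 2) → ℂ := fun p =>
      (Real.sqrt 2 : ℂ)⁻¹ *
        ((if p.1 = 0 ∧ p.2 = x0 then 1 else 0) +
          phase z * (if p.1 = 1 ∧ p.2 = x1 then 1 else 0))
    let vd : ZMod 2 → ℂ := fun a =>
      ∑ y : Fin n → ZMod 2, (phase (bdot d y) / (Real.sqrt 2 : ℂ) ^ n) * ψ (a, y)
    vd = (phase (bdot d x0) / (Real.sqrt 2 : ℂ) ^ n) •
        (fun a : ZMod 2 =>
          (Real.sqrt 2 : ℂ)⁻¹ * (if a = 0 then 1 else phase (z + bdot d (x0 + x1)))) ∧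
    ∑ a : ZMod 2, Complex.normSq (vd a) = ((2 : ℝ) ^ n)⁻¹ := by
  intro ψ vd
  have h01 : (0 : ZMod 2) ≠ 1 := by decide
  have hvd : vd = (phase (bdot d x0) / (Real.sqrt 2 : ℂ) ^ n) •
      (fun a : ZMod 2 =>
        (Real.sqrt 2 : ℂ)⁻¹ * (if a = 0 then 1 else phase (z + bdot d (x0 + x1)))) := by
    funext a
    rcases (show a = 0 ∨ a = 1 by fin_cases a; exacts [Or.inl rfl, Or.inr rfl]) with rfl | rfl
    · show (∑ y : Fin n → ZMod 2, _) = _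
      simp only [ψ, vd, Pi.smul_apply, smul_eq_mul]
      rw [Finset.sum_eq_single x0]
      · simp [h01]
      · intro y _ hy
        simp [h01, hy]
      · simp
    · show (∑ y : Fin n → ZMod 2, _) = _
      simp only [ψ, vd, Pi.smul_apply, smul_eq_mul]
      rw [Finset.sum_eq_single x1]
      · simp [h01.symm, bdot_add, phase_add]
        have h := phase_sq (bdot d x0)
        linear_combination (-(phase z * ((Real.sqrt 2 : ℂ))⁻¹ / ((Real.sqrt 2 : ℂ)) ^ n *
          phase (bdot d x1))) * h
      · intro y _ hy
        simp [h01.symm, hy]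
      · simp
  refine ⟨hvd, ?_⟩
  have hs2 : Complex.normSq ((Real.sqrt 2 : ℂ)) = 2 := by
    rw [Complex.normSq_ofReal, Real.mul_self_sqrt (by norm_num)]
  have hsn : Complex.normSq ((Real.sqrt 2 : ℂ) ^ n) = 2 ^ n := by
    rw [map_pow, hs2]
  have hsi : Complex.normSq ((Real.sqrt 2 : ℂ)⁻¹) = 2⁻¹ := by
    rw [map_inv₀, hs2]
  rw [hvd]
  simp only [Pi.smul_apply, smul_eq_mul, map_mul, Complex.normSq_div, normSq_phase, hsn, hsi]
  have huniv : (Finset.univ : Finset (ZMod 2)) = {0, 1} := by decide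
  rw [huniv, Finset.sum_insert (by decide), Finset.sum_singleton,
    if_pos rfl, if_neg h01.symm, normSq_phase]
  simp
  ring
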